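/- The per-channel-use terms of the outer bound are nondecreasing in the time index: t_j ≤ t_{j+1} for every integer j ≥ 1. -/

import Mathlib

open Finset Filter Topology

/-- Binary entropy function with base-2 logarithm. `Real.logb 2 0 = 0`, so
`H2 0 = H2 1 = 0` automatically. -/
noncomputable def H2 (p : ℝ) : ℝ :=
  -(p * Real.logb 2 p) - (1 - p) * Real.logb 2 (1 - p)

/-- Partial sums `s_j = ∑_{k=1}^j c_k` of the beam-budget sequence. -/
noncomputable def s (K B : ℝ) : ℕ → ℝ
  | 0 => 0
  | (j+1) => s K B j + min ((K - s K B j) / 2) B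

/-- The beam-budget sequence: `c_0 = 0` and `c_j = min((K - s_{j-1})/2, B)` for `j ≥ 1`. -/
noncomputable def c (K B : ℝ) : ℕ → ℝ
  | 0 => 0
  | (j+1) => min ((K - s K B j) / 2) B

/-- The `j`-th term of the outer bound (Theorem 1), for `j ≥ 1`. -/
noncomputable def t (K B : ℝ) (j : ℕ) : ℝ :=
  (1 - s K B (j-1) / K) * H2 (c K B j / (K - s K B (j-1))) + s K B (j-1) / K

/-- The outer-bound (Theorem 1) expression `U(L)`. -/
noncomputable def U (K B : ℝ) (L : ℕ) : ℝ :=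
  (1 / (L : ℝ)) * ∑ j ∈ Finset.Icc 1 L, t K B j

/-- The `j`-th eavesdropper-leakage term, for `j ≥ 1` (natural subtraction makes the
middle term vanish at `j = 1` and the final sum empty for `j ≤ 3`). -/
noncomputable def g (K B : ℝ) (j : ℕ) : ℝ :=
  ((K - s K B (j-1)) / K) * H2 (c K B j / K)
  + (c K B (j-1) * (K - s K B (j-2)) / K^2) *
      H2 ((1/2) * c K B (j-1) / (K - s K B (j-2)))
  + ∑ k ∈ Finset.Icc 1 (j-3),
      (1/K) * ((c K B (k+1))^2 / K^2) * (1/2 : ℝ)^(2*(j-k-2)-1)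

/-- The gap `G(L)` between the outer and inner bounds. -/
noncomputable def G (K B : ℝ) (L : ℕ) : ℝ :=
  (1 / (L : ℝ)) * ∑ j ∈ Finset.Icc 1 L, g K B j

/-- The inner-bound (Theorem 2) expression `I(L) = U(L) - G(L)`. -/
noncomputable def Ib (K B : ℝ) (L : ℕ) : ℝ := U K B L - G K B L

/-! ### Auxiliary lemmas -/

lemma H2_eq_binEntropy (p : ℝ) : H2 p = Real.binEntropy p / Real.log 2 := by
  simp only [H2, Real.binEntropy, Real.logb, Real.log_inv]
  ring

lemma H2_le_one (p : ℝ) : H2 p ≤ 1 := by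
  rw [H2_eq_binEntropy, div_le_one (Real.log_pos (by norm_num))]
  exact Real.binEntropy_le_log_two

lemma H2_half : H2 (1/2 : ℝ) = 1 := by
  have h2 : Real.log 2 ≠ 0 := ne_of_gt (Real.log_pos (by norm_num))
  have : Real.logb 2 (1/2 : ℝ) = -1 := by
    rw [one_div, Real.logb, Real.log_inv, neg_div]
    field_simp
  norm_num [H2, this]

/-- The auxiliary function used in the derivative argument. -/
noncomputable def Phi (B r : ℝ) : ℝ :=
  r * Real.log 2 + B * Real.log B + (r - B) * Real.log (r - B) - r * Real.log r

lemma Phi_hasDerivAt {B x : ℝ} (hB : 0 < B) (hx : B < x) :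
    HasDerivAt (Phi B) (Real.log 2 + Real.log (x - B) - Real.log x) x := by
  have hx0 : x ≠ 0 := ne_of_gt (hB.trans hx)
  have hxB : x - B ≠ 0 := ne_of_gt (sub_pos.mpr hx)
  have h1 : HasDerivAt (fun r : ℝ => r * Real.log 2) (Real.log 2) x := by
    simpa using (hasDerivAt_id x).mul_const (Real.log 2)
  have h2 : HasDerivAt (fun r : ℝ => (r - B) * Real.log (r - B))
      (Real.log (x - B) + 1) x := by
    have hinner : HasDerivAt (fun r : ℝ => r - B) 1 x := (hasDerivAt_id x).sub_const B
    have houter := Real.hasDerivAt_mul_log hxB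
    exact (houter.comp x hinner).congr_deriv (by ring : (Real.log (x - B) + 1) * 1 = Real.log (x - B) + 1)
  have h3 : HasDerivAt (fun r : ℝ => r * Real.log r) (Real.log x + 1) x :=
    Real.hasDerivAt_mul_log hx0
  have := ((h1.add_const (B * Real.log B)).add h2).sub h3
  convert this using 1
  · rfl
  · rfl
  · rfl
  · ring

lemma Phi_monotoneOn {B : ℝ} (hB : 0 < B) : MonotoneOn (Phi B) (Set.Ici (2*B)) := by
  have hint : interior (Set.Ici (2*B)) = Set.Ioi (2*B) := interior_Ici
  apply monotoneOn_of_deriv_nonneg (convex_Ici _)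
  · intro x hx
    have hx' : B < x := lt_of_lt_of_le (by linarith) hx
    exact ((Phi_hasDerivAt hB hx').differentiableAt).continuousAt.continuousWithinAt
  · rw [hint]
    intro x hx
    have hx' : B < x := by have := Set.mem_Ioi.mp hx; linarith
    exact ((Phi_hasDerivAt hB hx').differentiableAt).differentiableWithinAt
  · rw [hint]
    intro x hx
    have hx2 : 2*B < x := Set.mem_Ioi.mp hx
    have hx' : B < x := by linarith
    rw [(Phi_hasDerivAt hB hx').deriv]
    have hxB : (0:ℝ) < x - B := by linarith
    have : Real.log x ≤ Real.log 2 + Real.log (x - B) := by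
      rw [← Real.log_mul (by norm_num) (ne_of_gt hxB)]
      exact Real.log_le_log (by linarith) (by linarith)
    linarith

/-- The key function: `φ(r) = r (1 - H₂(min(r/2, B)/r))`. -/
noncomputable def phi (B r : ℝ) : ℝ := r * (1 - H2 (min (r/2) B / r))

lemma phi_eq_zero {B r : ℝ} (hr : 0 < r) (h : r ≤ 2*B) : phi B r = 0 := by
  have hmin : min (r/2) B = r/2 := min_eq_left (by linarith)
  have h12 : r/2/r = (1/2 : ℝ) := by field_simp
  rw [phi, hmin, h12, H2_half]; ring

lemma phi_eq_Phi {B r : ℝ} (hB : 0 < B) (h : 2*B ≤ r) :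
    phi B r = Phi B r / Real.log 2 := by
  have hr : 0 < r := by linarith
  have hrB : 0 < r - B := by linarith
  have h2 : (0:ℝ) < Real.log 2 := Real.log_pos (by norm_num)
  have hmin : min (r/2) B = B := min_eq_right (by linarith)
  have h1B : 1 - B / r = (r - B) / r := by field_simp
  have hlog1 : Real.logb 2 (B / r) = (Real.log B - Real.log r) / Real.log 2 := by
    rw [Real.logb, Real.log_div (ne_of_gt hB) (ne_of_gt hr)]
  have hlog2 : Real.logb 2 ((r - B) / r) = (Real.log (r - B) - Real.log r) / Real.log 2 := by
    rw [Real.logb, Real.log_div (ne_of_gt hrB) (ne_of_gt hr)]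
  rw [phi, hmin, H2, h1B, hlog1, hlog2, Phi]
  field_simp
  ring

lemma phi_nonneg {B r : ℝ} (hB : 0 < B) (hr : 0 < r) : 0 ≤ phi B r := by
  rcases le_or_gt r (2*B) with h | h
  · rw [phi_eq_zero hr h]
  · have : H2 (min (r/2) B / r) ≤ 1 := H2_le_one _
    have : 0 ≤ 1 - H2 (min (r/2) B / r) := by linarith
    exact mul_nonneg hr.le this

lemma phi_mono {B r r' : ℝ} (hB : 0 < B) (hr' : 0 < r') (h : r' ≤ r) :
    phi B r' ≤ phi B r := by
  rcases le_or_gt r' (2*B) with h1 | h1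
  · rw [phi_eq_zero hr' h1]
    exact phi_nonneg hB (lt_of_lt_of_le hr' h)
  · have h2 : 2*B ≤ r := by linarith
    rw [phi_eq_Phi hB h1.le, phi_eq_Phi hB h2]
    have hlog : (0:ℝ) < Real.log 2 := Real.log_pos (by norm_num)
    have hm := Phi_monotoneOn hB (Set.mem_Ici.mpr h1.le) (Set.mem_Ici.mpr h2) h
    gcongr

/-- Invariant: `0 ≤ s_j < K`. -/
lemma s_bounds {K B : ℝ} (hK : 0 < K) (hB : 0 < B) :
    ∀ j : ℕ, 0 ≤ s K B j ∧ s K B j < K := by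
  intro j
  induction j with
  | zero => simp [s, hK]
  | succ n ih =>
    obtain ⟨h0, h1⟩ := ih
    have hmin0 : 0 < min ((K - s K B n) / 2) B := lt_min (by linarith) hB
    have hmin1 : min ((K - s K B n) / 2) B ≤ (K - s K B n) / 2 := min_le_left _ _
    constructor
    · simp only [s]; linarith
    · simp only [s]; linarith

lemma t_eq_phi {K B : ℝ} (hK : 0 < K) (hB : 0 < B) (m : ℕ) :
    t K B (m+1) = 1 - phi B (K - s K B m) / K := by
  obtain ⟨h0, h1⟩ := s_bounds hK hB m
  have hr : 0 < K - s K B m := by linarith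
  have : c K B (m+1) = min ((K - s K B m) / 2) B := rfl
  rw [t]
  simp only [Nat.add_sub_cancel, this, phi]
  have h1K : 1 - s K B m / K = (K - s K B m) / K := by field_simp
  rw [h1K]
  field_simp
  ring

theorem stmt_7 (K : ℕ) (hK : 2 ≤ K) (B : ℝ) (hB : 0 < B) :
    ∀ j : ℕ, 1 ≤ j → t K B j ≤ t K B (j+1) := by
  intro j hj
  obtain ⟨m, rfl⟩ := Nat.exists_eq_add_of_le hj
  have hK' : (0:ℝ) < K := by positivity
  rw [add_comm 1 m, t_eq_phi hK' hB m, t_eq_phi hK' hB (m+1)]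
  have hb := s_bounds hK' hB m
  have hb' := s_bounds hK' hB (m+1)
  have hstep : s K B m ≤ s K B (m+1) := by
    have : 0 < min ((K - s K B m) / 2) B := lt_min (by linarith [hb.2]) hB
    simp only [s]; linarith
  have h1 : (0:ℝ) < K - s K B (m+1) := by linarith [hb'.2]
  have h2 : K - s K B (m+1) ≤ K - s K B m := by linarith
  have := phi_mono hB h1 h2
  have hKpos : (0:ℝ) < K := hK'
  gcongr
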